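/- Let f₁ = x² + y² + k₁x²y + Σ_{i+j=4} c_{ij}x^i y^j and f₂ = φ₃ + Σ_{i+j=4} d_{ij}x^i y^j (φ₃ a homogeneous cubic). Then the projective transformation with q₁ = x, q₂ = y, q₃ = z, q₄ = w, p = 1 + c₄₀z transforms the 4-jet of (f₁, f₂) into (x² + y² + k₁x²y + yψ₃, φ₃ + φ₄) for some homogeneous cubic ψ₃ and quartic φ₄; i.e., the x⁴ coefficient of the first component is eliminated. -/

import Mathlib

open Filter Asymptotics Topology

private def jA : ℝ × ℝ → ℝ := fun v => v.1 ^ 2 + v.2 ^ 2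

private def jB (k₁ : ℝ) : ℝ × ℝ → ℝ := fun v => k₁ * v.1 ^ 2 * v.2

private def jS (c40 c31 c22 c13 c04 : ℝ) : ℝ × ℝ → ℝ := fun v =>
  v.2 * (c31 * v.1 ^ 3 + (c22 - 2 * c40) * v.1 ^ 2 * v.2
    + c13 * v.1 * v.2 ^ 2 + (c04 - c40) * v.2 ^ 3)

private def jQ (k₁ c40 c31 c22 c13 c04 : ℝ) : ℝ × ℝ → ℝ := fun v =>
  jA v + jB k₁ v + jS c40 c31 c22 c13 c04 v

private def jP (k₁ c40 c31 c22 c13 c04 : ℝ) : ℝ × ℝ → ℝ := fun v =>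
  1 + c40 * jQ k₁ c40 c31 c22 c13 c04 v

private def jC (p30 p21 p12 p03 : ℝ) : ℝ × ℝ → ℝ := fun v =>
  p30 * v.1 ^ 3 + p21 * v.1 ^ 2 * v.2 + p12 * v.1 * v.2 ^ 2 + p03 * v.2 ^ 3

private def jD (d40 d31 d22 d13 d04 : ℝ) : ℝ × ℝ → ℝ := fun v =>
  d40 * v.1 ^ 4 + d31 * v.1 ^ 3 * v.2 + d22 * v.1 ^ 2 * v.2 ^ 2
    + d13 * v.1 * v.2 ^ 3 + d04 * v.2 ^ 4

private lemma bO_fst : (fun v : ℝ × ℝ => v.1) =O[𝓝 (0 : ℝ × ℝ)] fun v => ‖v‖ :=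
  isBigO_of_le _ fun v => by simpa using norm_fst_le v

private lemma bO_snd : (fun v : ℝ × ℝ => v.2) =O[𝓝 (0 : ℝ × ℝ)] fun v => ‖v‖ :=
  isBigO_of_le _ fun v => by simpa using norm_snd_le v

private lemma bO_pow_le {m n : ℕ} (h : m ≤ n) :
    (fun v : ℝ × ℝ => ‖v‖ ^ n) =O[𝓝 (0 : ℝ × ℝ)] fun v => ‖v‖ ^ m := by
  rw [isBigO_iff]
  refine ⟨1, ?_⟩
  have hb : ∀ᶠ v : ℝ × ℝ in 𝓝 0, ‖v‖ ≤ 1 := by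
    filter_upwards [Metric.closedBall_mem_nhds (0 : ℝ × ℝ) one_pos] with v hv
    simpa using hv
  filter_upwards [hb] with v hv
  simp only [norm_pow, norm_norm, one_mul]
  exact pow_le_pow_of_le_one (norm_nonneg v) hv h

private lemma bO_down {f : ℝ × ℝ → ℝ} {m n : ℕ} (h : n ≤ m)
    (hf : f =O[𝓝 (0 : ℝ × ℝ)] fun v => ‖v‖ ^ m) :
    f =O[𝓝 (0 : ℝ × ℝ)] fun v => ‖v‖ ^ n :=
  hf.trans (bO_pow_le h)

private lemma bO_mul {f g : ℝ × ℝ → ℝ} {m n k : ℕ} (hk : m + n = k)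
    (hf : f =O[𝓝 (0 : ℝ × ℝ)] fun v => ‖v‖ ^ m)
    (hg : g =O[𝓝 (0 : ℝ × ℝ)] fun v => ‖v‖ ^ n) :
    (fun v => f v * g v) =O[𝓝 (0 : ℝ × ℝ)] fun v => ‖v‖ ^ k := by
  subst hk
  simpa [pow_add] using hf.mul hg

private lemma bO_mul_one {f u : ℝ × ℝ → ℝ} {n : ℕ}
    (hf : f =O[𝓝 (0 : ℝ × ℝ)] fun v => ‖v‖ ^ n)
    (hu : u =O[𝓝 (0 : ℝ × ℝ)] fun _ => (1 : ℝ)) :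
    (fun v => f v * u v) =O[𝓝 (0 : ℝ × ℝ)] fun v => ‖v‖ ^ n := by
  simpa using hf.mul hu

private lemma bO_one_mul {f u : ℝ × ℝ → ℝ} {n : ℕ}
    (hu : u =O[𝓝 (0 : ℝ × ℝ)] fun _ => (1 : ℝ))
    (hf : f =O[𝓝 (0 : ℝ × ℝ)] fun v => ‖v‖ ^ n) :
    (fun v => u v * f v) =O[𝓝 (0 : ℝ × ℝ)] fun v => ‖v‖ ^ n := by
  simpa using hu.mul hf

private lemma lo_pow : (fun v : ℝ × ℝ => ‖v‖ ^ 5) =o[𝓝 (0 : ℝ × ℝ)] fun v => ‖v‖ ^ 4 := by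
  have h1 : (fun v : ℝ × ℝ => ‖v‖) =o[𝓝 (0 : ℝ × ℝ)] (fun _ => (1 : ℝ)) := by
    rw [isLittleO_one_iff]
    simpa using continuous_norm.tendsto (0 : ℝ × ℝ)
  have h := h1.mul_isBigO (isBigO_refl (fun v : ℝ × ℝ => ‖v‖ ^ 4) (𝓝 0))
  have e1 : (fun v : ℝ × ℝ => ‖v‖ * ‖v‖ ^ 4) = fun v : ℝ × ℝ => ‖v‖ ^ 5 := by
    funext v; ring
  have e2 : (fun v : ℝ × ℝ => (1 : ℝ) * ‖v‖ ^ 4) = fun v : ℝ × ℝ => ‖v‖ ^ 4 := by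
    funext v; ring
  rwa [e1, e2] at h

private lemma hA_bO : jA =O[𝓝 (0 : ℝ × ℝ)] fun v => ‖v‖ ^ 2 :=
  (bO_fst.pow 2).add (bO_snd.pow 2)

private lemma hB_bO (k₁ : ℝ) : jB k₁ =O[𝓝 (0 : ℝ × ℝ)] fun v => ‖v‖ ^ 3 := by
  have h := (bO_mul (by norm_num : 2 + 1 = 3) (bO_fst.pow 2) (bO_snd.pow 1)).const_mul_left k₁
  have e : (fun v : ℝ × ℝ => k₁ * (v.1 ^ 2 * v.2 ^ 1)) = jB k₁ := by
    funext v; simp only [jB]; ring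
  rwa [e] at h

private lemma hS_bO (c40 c31 c22 c13 c04 : ℝ) :
    jS c40 c31 c22 c13 c04 =O[𝓝 (0 : ℝ × ℝ)] fun v => ‖v‖ ^ 4 := by
  have t1 := (bO_fst.pow 3).const_mul_left c31
  have t2 := (bO_mul (by norm_num : 2 + 1 = 3) (bO_fst.pow 2) (bO_snd.pow 1)).const_mul_left
    (c22 - 2 * c40)
  have t3 := (bO_mul (by norm_num : 1 + 2 = 3) (bO_fst.pow 1) (bO_snd.pow 2)).const_mul_left c13
  have t4 := (bO_snd.pow 3).const_mul_left (c04 - c40)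
  have hT := ((t1.add t2).add t3).add t4
  have h := bO_mul (by norm_num : 1 + 3 = 4) (bO_snd.pow 1) hT
  have e : (fun v : ℝ × ℝ => v.2 ^ 1 * (c31 * v.1 ^ 3 + (c22 - 2 * c40) * (v.1 ^ 2 * v.2 ^ 1)
      + c13 * (v.1 ^ 1 * v.2 ^ 2) + (c04 - c40) * v.2 ^ 3)) = jS c40 c31 c22 c13 c04 := by
    funext v; simp only [jS]; ring
  rwa [e] at h

private lemma hQ_bO (k₁ c40 c31 c22 c13 c04 : ℝ) :
    jQ k₁ c40 c31 c22 c13 c04 =O[𝓝 (0 : ℝ × ℝ)] fun v => ‖v‖ ^ 2 :=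
  (hA_bO.add (bO_down (by norm_num) (hB_bO k₁))).add
    (bO_down (by norm_num) (hS_bO c40 c31 c22 c13 c04))

private lemma hC_bO (p30 p21 p12 p03 : ℝ) :
    jC p30 p21 p12 p03 =O[𝓝 (0 : ℝ × ℝ)] fun v => ‖v‖ ^ 3 := by
  have t1 := (bO_fst.pow 3).const_mul_left p30
  have t2 := (bO_mul (by norm_num : 2 + 1 = 3) (bO_fst.pow 2) (bO_snd.pow 1)).const_mul_left p21
  have t3 := (bO_mul (by norm_num : 1 + 2 = 3) (bO_fst.pow 1) (bO_snd.pow 2)).const_mul_left p12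
  have t4 := (bO_snd.pow 3).const_mul_left p03
  have h := ((t1.add t2).add t3).add t4
  have e : (fun v : ℝ × ℝ => p30 * v.1 ^ 3 + p21 * (v.1 ^ 2 * v.2 ^ 1)
      + p12 * (v.1 ^ 1 * v.2 ^ 2) + p03 * v.2 ^ 3) = jC p30 p21 p12 p03 := by
    funext v; simp only [jC]; ring
  rwa [e] at h

private lemma hD_bO (d40 d31 d22 d13 d04 : ℝ) :
    jD d40 d31 d22 d13 d04 =O[𝓝 (0 : ℝ × ℝ)] fun v => ‖v‖ ^ 4 := by
  have t1 := (bO_fst.pow 4).const_mul_left d40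
  have t2 := (bO_mul (by norm_num : 3 + 1 = 4) (bO_fst.pow 3) (bO_snd.pow 1)).const_mul_left d31
  have t3 := (bO_mul (by norm_num : 2 + 2 = 4) (bO_fst.pow 2) (bO_snd.pow 2)).const_mul_left d22
  have t4 := (bO_mul (by norm_num : 1 + 3 = 4) (bO_fst.pow 1) (bO_snd.pow 3)).const_mul_left d13
  have t5 := (bO_snd.pow 4).const_mul_left d04
  have h := (((t1.add t2).add t3).add t4).add t5
  have e : (fun v : ℝ × ℝ => d40 * v.1 ^ 4 + d31 * (v.1 ^ 3 * v.2 ^ 1)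
      + d22 * (v.1 ^ 2 * v.2 ^ 2) + d13 * (v.1 ^ 1 * v.2 ^ 3) + d04 * v.2 ^ 4)
      = jD d40 d31 d22 d13 d04 := by
    funext v; simp only [jD]; ring
  rwa [e] at h

private lemma hQ_tendsto (k₁ c40 c31 c22 c13 c04 : ℝ) :
    Tendsto (jQ k₁ c40 c31 c22 c13 c04) (𝓝 (0 : ℝ × ℝ)) (𝓝 0) := by
  refine (hQ_bO k₁ c40 c31 c22 c13 c04).trans_tendsto ?_
  have h : Tendsto (fun v : ℝ × ℝ => ‖v‖) (𝓝 0) (𝓝 0) := by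
    simpa using continuous_norm.tendsto (0 : ℝ × ℝ)
  simpa using h.pow 2

private lemma hP_tendsto (k₁ c40 c31 c22 c13 c04 : ℝ) :
    Tendsto (jP k₁ c40 c31 c22 c13 c04) (𝓝 (0 : ℝ × ℝ)) (𝓝 1) := by
  have h := ((hQ_tendsto k₁ c40 c31 c22 c13 c04).const_mul c40).const_add (1 : ℝ)
  simp only [mul_zero, add_zero] at h
  exact h

set_option maxHeartbeats 1000000 in
private lemma key₁ (c40 A B S q t : ℝ) (h1 : q = A + B + S) (h2 : t = 1 + c40 * q)
    (h0 : t ≠ 0) :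
    c40 * (A * (B + S) + c40 * (A * (q * q * (t + 1))) + B * (t * ((t + 1) * q))
        + S * ((t * t + t + 1) * q)) * (t ^ 4)⁻¹
      = q / t - (A / t ^ 2 + B / t ^ 3 + (S + c40 * A ^ 2) / t ^ 4) := by
  field_simp
  subst h2 h1
  ring

set_option maxHeartbeats 1000000 in
private lemma key₂ (c40 C D q t : ℝ) (h2 : t = 1 + c40 * q) (h0 : t ≠ 0) :
    c40 * (C * (t * ((t + 1) * q)) + D * ((t * t + t + 1) * q)) * (t ^ 4)⁻¹
      = (C + D) / t - (C / t ^ 3 + D / t ^ 4) := by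
  field_simp
  subst h2
  ring

set_option maxHeartbeats 1000000 in
private lemma jet4_aux₁ (k₁ c40 c31 c22 c13 c04 : ℝ) :
    (fun v : ℝ × ℝ => jQ k₁ c40 c31 c22 c13 c04 v / jP k₁ c40 c31 c22 c13 c04 v
      - ((v.1 / jP k₁ c40 c31 c22 c13 c04 v) ^ 2 + (v.2 / jP k₁ c40 c31 c22 c13 c04 v) ^ 2
        + k₁ * (v.1 / jP k₁ c40 c31 c22 c13 c04 v) ^ 2 * (v.2 / jP k₁ c40 c31 c22 c13 c04 v)
        + c40 * (v.1 / jP k₁ c40 c31 c22 c13 c04 v) ^ 4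
        + c31 * (v.1 / jP k₁ c40 c31 c22 c13 c04 v) ^ 3 * (v.2 / jP k₁ c40 c31 c22 c13 c04 v)
        + c22 * (v.1 / jP k₁ c40 c31 c22 c13 c04 v) ^ 2 * (v.2 / jP k₁ c40 c31 c22 c13 c04 v) ^ 2
        + c13 * (v.1 / jP k₁ c40 c31 c22 c13 c04 v) * (v.2 / jP k₁ c40 c31 c22 c13 c04 v) ^ 3
        + c04 * (v.2 / jP k₁ c40 c31 c22 c13 c04 v) ^ 4))
      =o[𝓝 (0 : ℝ × ℝ)] fun v => ‖v‖ ^ 4 := by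
  have hPt := hP_tendsto k₁ c40 c31 c22 c13 c04
  have hPne : ∀ᶠ v in 𝓝 (0 : ℝ × ℝ), jP k₁ c40 c31 c22 c13 c04 v ≠ 0 := hPt.eventually_ne one_ne_zero
  have hinv : (fun v => (jP k₁ c40 c31 c22 c13 c04 v ^ 4)⁻¹) =O[𝓝 (0 : ℝ × ℝ)] fun _ => (1 : ℝ) :=
    ((hPt.pow 4).inv₀ (by norm_num)).isBigO_one ℝ
  have hP1 : jP k₁ c40 c31 c22 c13 c04 =O[𝓝 (0 : ℝ × ℝ)] fun _ => (1 : ℝ) := hPt.isBigO_one ℝ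
  have hPp1 : (fun v => jP k₁ c40 c31 c22 c13 c04 v + 1) =O[𝓝 (0 : ℝ × ℝ)] fun _ => (1 : ℝ) :=
    (hPt.add tendsto_const_nhds).isBigO_one ℝ
  have hPP : (fun v => jP k₁ c40 c31 c22 c13 c04 v * jP k₁ c40 c31 c22 c13 c04 v + jP k₁ c40 c31 c22 c13 c04 v + 1) =O[𝓝 (0 : ℝ × ℝ)] fun _ => (1 : ℝ) :=
    (((hPt.mul hPt).add hPt).add tendsto_const_nhds).isBigO_one ℝ
  have hA := hA_bO
  have hB := hB_bO k₁
  have hS := hS_bO c40 c31 c22 c13 c04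
  have hQ := hQ_bO k₁ c40 c31 c22 c13 c04
  have t1 : (fun v => jA v * (jB k₁ v + jS c40 c31 c22 c13 c04 v)) =O[𝓝 (0 : ℝ × ℝ)] fun v => ‖v‖ ^ 5 :=
    bO_mul (by norm_num) hA (hB.add (bO_down (by norm_num) hS))
  have t2 : (fun v => c40 * (jA v * (jQ k₁ c40 c31 c22 c13 c04 v * jQ k₁ c40 c31 c22 c13 c04 v * (jP k₁ c40 c31 c22 c13 c04 v + 1)))) =O[𝓝 (0 : ℝ × ℝ)]
      fun v => ‖v‖ ^ 5 := by
    have inner : (fun v => jQ k₁ c40 c31 c22 c13 c04 v * jQ k₁ c40 c31 c22 c13 c04 v * (jP k₁ c40 c31 c22 c13 c04 v + 1)) =O[𝓝 (0 : ℝ × ℝ)] fun v => ‖v‖ ^ 4 :=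
      bO_mul_one (bO_mul (by norm_num) hQ hQ) hPp1
    exact (bO_down (by norm_num) (bO_mul (by norm_num : 2 + 4 = 6) hA inner)).const_mul_left c40
  have t3 : (fun v => jB k₁ v * (jP k₁ c40 c31 c22 c13 c04 v * ((jP k₁ c40 c31 c22 c13 c04 v + 1) * jQ k₁ c40 c31 c22 c13 c04 v))) =O[𝓝 (0 : ℝ × ℝ)]
      fun v => ‖v‖ ^ 5 :=
    bO_mul (by norm_num) hB (bO_one_mul hP1 (bO_one_mul hPp1 hQ))
  have t4 : (fun v => jS c40 c31 c22 c13 c04 v * ((jP k₁ c40 c31 c22 c13 c04 v * jP k₁ c40 c31 c22 c13 c04 v + jP k₁ c40 c31 c22 c13 c04 v + 1) * jQ k₁ c40 c31 c22 c13 c04 v)) =O[𝓝 (0 : ℝ × ℝ)]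
      fun v => ‖v‖ ^ 5 :=
    bO_down (by norm_num) (bO_mul (by norm_num : 4 + 2 = 6) hS (bO_one_mul hPP hQ))
  have hM := ((t1.add t2).add t3).add t4
  have hMo := hM.trans_isLittleO lo_pow
  have final := (hMo.const_mul_left c40).mul_isBigO hinv
  have e : (fun v : ℝ × ℝ => ‖v‖ ^ 4 * 1) = fun v : ℝ × ℝ => ‖v‖ ^ 4 := by
    funext v; ring
  rw [e] at final
  refine final.congr' ?_ EventuallyEq.rfl
  filter_upwards [hPne] with v hv
  have h2 : ((v.1 / jP k₁ c40 c31 c22 c13 c04 v) ^ 2 + (v.2 / jP k₁ c40 c31 c22 c13 c04 v) ^ 2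
        + k₁ * (v.1 / jP k₁ c40 c31 c22 c13 c04 v) ^ 2 * (v.2 / jP k₁ c40 c31 c22 c13 c04 v)
        + c40 * (v.1 / jP k₁ c40 c31 c22 c13 c04 v) ^ 4
        + c31 * (v.1 / jP k₁ c40 c31 c22 c13 c04 v) ^ 3 * (v.2 / jP k₁ c40 c31 c22 c13 c04 v)
        + c22 * (v.1 / jP k₁ c40 c31 c22 c13 c04 v) ^ 2 * (v.2 / jP k₁ c40 c31 c22 c13 c04 v) ^ 2
        + c13 * (v.1 / jP k₁ c40 c31 c22 c13 c04 v) * (v.2 / jP k₁ c40 c31 c22 c13 c04 v) ^ 3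
        + c04 * (v.2 / jP k₁ c40 c31 c22 c13 c04 v) ^ 4)
      = jA v / (jP k₁ c40 c31 c22 c13 c04 v) ^ 2 + jB k₁ v / (jP k₁ c40 c31 c22 c13 c04 v) ^ 3
        + (jS c40 c31 c22 c13 c04 v + c40 * jA v ^ 2) / (jP k₁ c40 c31 c22 c13 c04 v) ^ 4 := by
    simp only [jA, jB, jS]
    field_simp
    ring
  rw [h2]
  exact key₁ c40 (jA v) (jB k₁ v) (jS c40 c31 c22 c13 c04 v) (jQ k₁ c40 c31 c22 c13 c04 v)
    (jP k₁ c40 c31 c22 c13 c04 v) rfl rfl hv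

set_option maxHeartbeats 1000000 in
private lemma jet4_aux₂ (k₁ p30 p21 p12 p03 c40 c31 c22 c13 c04 d40 d31 d22 d13 d04 : ℝ) :
    (fun v : ℝ × ℝ => (jC p30 p21 p12 p03 v + jD d40 d31 d22 d13 d04 v) / jP k₁ c40 c31 c22 c13 c04 v
      - ((p30 * (v.1 / jP k₁ c40 c31 c22 c13 c04 v) ^ 3
          + p21 * (v.1 / jP k₁ c40 c31 c22 c13 c04 v) ^ 2 * (v.2 / jP k₁ c40 c31 c22 c13 c04 v)
          + p12 * (v.1 / jP k₁ c40 c31 c22 c13 c04 v) * (v.2 / jP k₁ c40 c31 c22 c13 c04 v) ^ 2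
          + p03 * (v.2 / jP k₁ c40 c31 c22 c13 c04 v) ^ 3)
        + d40 * (v.1 / jP k₁ c40 c31 c22 c13 c04 v) ^ 4
        + d31 * (v.1 / jP k₁ c40 c31 c22 c13 c04 v) ^ 3 * (v.2 / jP k₁ c40 c31 c22 c13 c04 v)
        + d22 * (v.1 / jP k₁ c40 c31 c22 c13 c04 v) ^ 2 * (v.2 / jP k₁ c40 c31 c22 c13 c04 v) ^ 2
        + d13 * (v.1 / jP k₁ c40 c31 c22 c13 c04 v) * (v.2 / jP k₁ c40 c31 c22 c13 c04 v) ^ 3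
        + d04 * (v.2 / jP k₁ c40 c31 c22 c13 c04 v) ^ 4))
      =o[𝓝 (0 : ℝ × ℝ)] fun v => ‖v‖ ^ 4 := by
  have hPt := hP_tendsto k₁ c40 c31 c22 c13 c04
  have hPne : ∀ᶠ v in 𝓝 (0 : ℝ × ℝ), jP k₁ c40 c31 c22 c13 c04 v ≠ 0 := hPt.eventually_ne one_ne_zero
  have hinv : (fun v => (jP k₁ c40 c31 c22 c13 c04 v ^ 4)⁻¹) =O[𝓝 (0 : ℝ × ℝ)] fun _ => (1 : ℝ) :=
    ((hPt.pow 4).inv₀ (by norm_num)).isBigO_one ℝ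
  have hP1 : jP k₁ c40 c31 c22 c13 c04 =O[𝓝 (0 : ℝ × ℝ)] fun _ => (1 : ℝ) := hPt.isBigO_one ℝ
  have hPp1 : (fun v => jP k₁ c40 c31 c22 c13 c04 v + 1) =O[𝓝 (0 : ℝ × ℝ)] fun _ => (1 : ℝ) :=
    (hPt.add tendsto_const_nhds).isBigO_one ℝ
  have hPP : (fun v => jP k₁ c40 c31 c22 c13 c04 v * jP k₁ c40 c31 c22 c13 c04 v + jP k₁ c40 c31 c22 c13 c04 v + 1) =O[𝓝 (0 : ℝ × ℝ)] fun _ => (1 : ℝ) :=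
    (((hPt.mul hPt).add hPt).add tendsto_const_nhds).isBigO_one ℝ
  have hC := hC_bO p30 p21 p12 p03
  have hD := hD_bO d40 d31 d22 d13 d04
  have hQ := hQ_bO k₁ c40 c31 c22 c13 c04
  have t1 : (fun v => jC p30 p21 p12 p03 v * (jP k₁ c40 c31 c22 c13 c04 v * ((jP k₁ c40 c31 c22 c13 c04 v + 1) * jQ k₁ c40 c31 c22 c13 c04 v))) =O[𝓝 (0 : ℝ × ℝ)]
      fun v => ‖v‖ ^ 5 :=
    bO_mul (by norm_num) hC (bO_one_mul hP1 (bO_one_mul hPp1 hQ))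
  have t2 : (fun v => jD d40 d31 d22 d13 d04 v * ((jP k₁ c40 c31 c22 c13 c04 v * jP k₁ c40 c31 c22 c13 c04 v + jP k₁ c40 c31 c22 c13 c04 v + 1) * jQ k₁ c40 c31 c22 c13 c04 v)) =O[𝓝 (0 : ℝ × ℝ)]
      fun v => ‖v‖ ^ 5 :=
    bO_down (by norm_num) (bO_mul (by norm_num : 4 + 2 = 6) hD (bO_one_mul hPP hQ))
  have hM := t1.add t2
  have hMo := hM.trans_isLittleO lo_pow
  have final := (hMo.const_mul_left c40).mul_isBigO hinv
  have e : (fun v : ℝ × ℝ => ‖v‖ ^ 4 * 1) = fun v : ℝ × ℝ => ‖v‖ ^ 4 := by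
    funext v; ring
  rw [e] at final
  refine final.congr' ?_ EventuallyEq.rfl
  filter_upwards [hPne] with v hv
  have h2 : ((p30 * (v.1 / jP k₁ c40 c31 c22 c13 c04 v) ^ 3
          + p21 * (v.1 / jP k₁ c40 c31 c22 c13 c04 v) ^ 2 * (v.2 / jP k₁ c40 c31 c22 c13 c04 v)
          + p12 * (v.1 / jP k₁ c40 c31 c22 c13 c04 v) * (v.2 / jP k₁ c40 c31 c22 c13 c04 v) ^ 2
          + p03 * (v.2 / jP k₁ c40 c31 c22 c13 c04 v) ^ 3)
        + d40 * (v.1 / jP k₁ c40 c31 c22 c13 c04 v) ^ 4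
        + d31 * (v.1 / jP k₁ c40 c31 c22 c13 c04 v) ^ 3 * (v.2 / jP k₁ c40 c31 c22 c13 c04 v)
        + d22 * (v.1 / jP k₁ c40 c31 c22 c13 c04 v) ^ 2 * (v.2 / jP k₁ c40 c31 c22 c13 c04 v) ^ 2
        + d13 * (v.1 / jP k₁ c40 c31 c22 c13 c04 v) * (v.2 / jP k₁ c40 c31 c22 c13 c04 v) ^ 3
        + d04 * (v.2 / jP k₁ c40 c31 c22 c13 c04 v) ^ 4)
      = jC p30 p21 p12 p03 v / (jP k₁ c40 c31 c22 c13 c04 v) ^ 3 + jD d40 d31 d22 d13 d04 v / (jP k₁ c40 c31 c22 c13 c04 v) ^ 4 := by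
    simp only [jC, jD]
    field_simp
    ring
  rw [h2]
  exact key₂ c40 (jC p30 p21 p12 p03 v) (jD d40 d31 d22 d13 d04 v)
    (jQ k₁ c40 c31 c22 c13 c04 v) (jP k₁ c40 c31 c22 c13 c04 v) rfl hv

set_option maxHeartbeats 2000000 in
theorem jet4_inflection_plus_normal_form
    (k₁ p30 p21 p12 p03 c40 c31 c22 c13 c04 d40 d31 d22 d13 d04 : ℝ)
    (f₁ f₂ : ℝ × ℝ → ℝ)
    (hf₁ : f₁ = fun v => v.1 ^ 2 + v.2 ^ 2 + k₁ * v.1 ^ 2 * v.2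
      + c40 * v.1 ^ 4 + c31 * v.1 ^ 3 * v.2 + c22 * v.1 ^ 2 * v.2 ^ 2
      + c13 * v.1 * v.2 ^ 3 + c04 * v.2 ^ 4)
    (hf₂ : f₂ = fun v => (p30 * v.1 ^ 3 + p21 * v.1 ^ 2 * v.2
        + p12 * v.1 * v.2 ^ 2 + p03 * v.2 ^ 3)
      + d40 * v.1 ^ 4 + d31 * v.1 ^ 3 * v.2 + d22 * v.1 ^ 2 * v.2 ^ 2
      + d13 * v.1 * v.2 ^ 3 + d04 * v.2 ^ 4) :
    ∃ (s30 s21 s12 s03 q40 q31 q22 q13 q04 : ℝ) (g₁ g₂ P : ℝ × ℝ → ℝ),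
      g₁ = (fun v => v.1 ^ 2 + v.2 ^ 2 + k₁ * v.1 ^ 2 * v.2
        + v.2 * (s30 * v.1 ^ 3 + s21 * v.1 ^ 2 * v.2
          + s12 * v.1 * v.2 ^ 2 + s03 * v.2 ^ 3)) ∧
      g₂ = (fun v => (p30 * v.1 ^ 3 + p21 * v.1 ^ 2 * v.2
          + p12 * v.1 * v.2 ^ 2 + p03 * v.2 ^ 3)
        + q40 * v.1 ^ 4 + q31 * v.1 ^ 3 * v.2 + q22 * v.1 ^ 2 * v.2 ^ 2
        + q13 * v.1 * v.2 ^ 3 + q04 * v.2 ^ 4) ∧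
      P = (fun v => 1 + c40 * g₁ v) ∧
      ((fun v : ℝ × ℝ => g₁ v / P v - f₁ (v.1 / P v, v.2 / P v))
          =o[𝓝 (0 : ℝ × ℝ)] fun v => ‖v‖ ^ 4) ∧
      ((fun v : ℝ × ℝ => g₂ v / P v - f₂ (v.1 / P v, v.2 / P v))
          =o[𝓝 (0 : ℝ × ℝ)] fun v => ‖v‖ ^ 4) := by
  subst hf₁ hf₂
  refine ⟨c31, c22 - 2 * c40, c13, c04 - c40, d40, d31, d22, d13, d04,
    _, _, _, rfl, rfl, rfl, ?_, ?_⟩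
  · refine (jet4_aux₁ k₁ c40 c31 c22 c13 c04).congr'
      (Eventually.of_forall fun v => ?_) EventuallyEq.rfl
    simp only [jP, jQ, jA, jB, jS]
  · refine (jet4_aux₂ k₁ p30 p21 p12 p03 c40 c31 c22 c13 c04 d40 d31 d22 d13 d04).congr'
      (Eventually.of_forall fun v => ?_) EventuallyEq.rfl
    simp only [jP, jQ, jA, jB, jS, jC, jD]
    all_goals ring
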